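/- Let τ > 0 and let φ : ℝ → ℝ be a twice differentiable function with φ(s) > 0 for all s satisfying φ'(s)² + (φ(s)² − τ)² = φ(s)² and φ''(s) = φ(s) − 2φ(s)(φ(s)² − τ) for all s ∈ ℝ. Define ζ(s) := φ(s) + τ/φ(s). Then ζ''(s) = ζ(s)(1 + 8τ − 2ζ(s)²) for every s ∈ ℝ. -/

import Mathlib

open Real

/-- For a positive solution `φ` of the Delaunay nodoid profile ODE
`φ'² + (φ² − τ)² = φ²` (also satisfying the second-order equation
`φ'' = φ − 2φ(φ² − τ)`), the auxiliary function `ζ = φ + τ/φ` satisfies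
`ζ'' = ζ(1 + 8τ − 2ζ²)`. -/
theorem delaunay_zeta_second_order (τ : ℝ) (hτ : 0 < τ) (φ : ℝ → ℝ)
    (hd1 : Differentiable ℝ φ) (hd2 : Differentiable ℝ (deriv φ))
    (hpos : ∀ s, 0 < φ s)
    (hode1 : ∀ s, (deriv φ s) ^ 2 + (φ s ^ 2 - τ) ^ 2 = φ s ^ 2)
    (hode2 : ∀ s, deriv (deriv φ) s = φ s - 2 * φ s * (φ s ^ 2 - τ)) :
    ∀ s : ℝ, deriv (deriv (fun t => φ t + τ / φ t)) s
      = (φ s + τ / φ s) * (1 + 8 * τ - 2 * (φ s + τ / φ s) ^ 2) := by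
  have hne : ∀ s, φ s ≠ 0 := fun s => (hpos s).ne'
  have hζ' : deriv (fun t => φ t + τ / φ t)
      = fun s => deriv φ s - τ * deriv φ s / (φ s) ^ 2 := by
    funext s
    have h1 : HasDerivAt φ (deriv φ s) s := (hd1 s).hasDerivAt
    have h2 : HasDerivAt (fun t => τ / φ t)
        ((0 * φ s - τ * deriv φ s) / (φ s) ^ 2) s :=
      (hasDerivAt_const s τ).div h1 (hne s)
    have := (h1.fun_add h2).deriv
    rw [this]; ring
  intro s
  rw [hζ']
  have h1 : HasDerivAt φ (deriv φ s) s := (hd1 s).hasDerivAt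
  have h1' : HasDerivAt (deriv φ) (deriv (deriv φ) s) s := (hd2 s).hasDerivAt
  have hnum : HasDerivAt (fun t => τ * deriv φ t) (τ * deriv (deriv φ) s) s :=
    h1'.const_mul τ
  have hden : HasDerivAt (fun t => (φ t) ^ 2) (2 * φ s ^ 1 * deriv φ s) s := by
    simpa using h1.fun_pow 2
  have hq : HasDerivAt (fun t => τ * deriv φ t / (φ t) ^ 2)
      ((τ * deriv (deriv φ) s * (φ s) ^ 2
        - τ * deriv φ s * (2 * φ s ^ 1 * deriv φ s)) / ((φ s) ^ 2) ^ 2) s :=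
    hnum.div hden (pow_ne_zero 2 (hne s))
  have hZ := (h1'.fun_sub hq).deriv
  rw [hZ]
  have hp2 : deriv φ s ^ 2 = φ s ^ 2 - (φ s ^ 2 - τ) ^ 2 := by
    have := hode1 s; linarith
  rw [hode2 s]
  have hφne := hne s
  field_simp
  linear_combination (2 * τ) * hp2
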